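/- Let C := Y² + Y − (X³ + X² − 44704·X − 3655907) in ℚ[X,Y], let F4, F9, F14 be the polynomials defined in the context, and define D : ℚ[X,Y] → ℚ[X,Y] by D(P) := (2Y+1)·∂P/∂X + (3X² + 2X − 44704)·∂P/∂Y (the derivation corresponding to the invariant differential ω = dx/(2y+1) on the elliptic curve y² + y = x³ + x² − 44704x − 3655907). Then there exist nonzero rational constants c₁, c₂, c₃ such that C divides each of the polynomials (3·F4·D(F9) − 7·D(F4)·F9) − c₁·F14, (2·F4·D(F14) − 7·D(F4)·F14) − c₂·F9², and (2·F9·D(F14) − 3·D(F9)·F14) − c₃·F4⁶. (This is Proposition 2(i) for the explicit model of X₀(3): F14, F9², F4⁶ are scalar multiples of 3F₄F₉′ − 7F₄′F₉, 2F₄F₁₄′ − 7F₄′F₁₄, 2F₉F₁₄′ − 3F₉′F₁₄ respectively.) -/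
import Mathlib


open MvPolynomial

/-- `X` as an element of `ℚ[X,Y]`. -/
noncomputable def XX : MvPolynomial (Fin 2) ℚ := MvPolynomial.X 0

/-- `Y` as an element of `ℚ[X,Y]`. -/
noncomputable def YY : MvPolynomial (Fin 2) ℚ := MvPolynomial.X 1

/-- The Weierstrass equation of the elliptic curve `y² + y = x³ + x² − 44704x − 3655907`. -/
noncomputable def Ccurve : MvPolynomial (Fin 2) ℚ :=
  YY ^ 2 + YY - (XX ^ 3 + XX ^ 2 - 44704 * XX - 3655907)

noncomputable def F4 : MvPolynomial (Fin 2) ℚ :=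
  XX ^ 2 - 1208 * XX - 227671 + 91 * YY

noncomputable def F9 : MvPolynomial (Fin 2) ℚ :=
  (8 * XX ^ 3 - 384 * XX ^ 2 - 13656232 * XX - 678909344) * YY
    - (1015 * XX ^ 4 + 770584 * XX ^ 3 + 163098512 * XX ^ 2 + 29785004488 * XX
        + 2319185361392)

noncomputable def F14 : MvPolynomial (Fin 2) ℚ :=
  8 * XX ^ 7 + 400071 * XX ^ 6 - 343453068 * XX ^ 5 - 238003853192 * XX ^ 4
    - 116011622641292 * XX ^ 3 - 15704111899877744 * XX ^ 2
    - 95316727595264672 * XX + 53553894620234333456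
    - (8428 * XX ^ 5 + 19974360 * XX ^ 4 + 18880768004 * XX ^ 3 + 4128079708928 * XX ^ 2
        + 335969653582304 * XX + 17681731246686360) * YY

/-- The derivation on `ℚ[X,Y]` corresponding to the invariant differential
`ω = dx/(2y+1)` on the curve `y² + y = x³ + x² − 44704x − 3655907`:
`D(P) = (2Y+1)·∂P/∂X + (3X² + 2X − 44704)·∂P/∂Y`. -/
noncomputable def D (P : MvPolynomial (Fin 2) ℚ) : MvPolynomial (Fin 2) ℚ :=
  (2 * YY + 1) * pderiv 0 P + (3 * XX ^ 2 + 2 * XX - 44704) * pderiv 1 P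

/-- Proposition 2(i) for the explicit model of `X₀(3)`: on the curve,
`F14`, `F9²`, `F4⁶` are scalar multiples of `3F₄F₉′ − 7F₄′F₉`, `2F₄F₁₄′ − 7F₄′F₁₄`,
`2F₉F₁₄′ − 3F₉′F₁₄` respectively. -/
lemma pderiv_ofNat (i : Fin 2) (n : ℕ) [n.AtLeastTwo] :
    pderiv i (no_index (OfNat.ofNat n) : MvPolynomial (Fin 2) ℚ) = 0 := by
  rw [← map_ofNat (C : ℚ →+* MvPolynomial (Fin 2) ℚ) n, pderiv_C]

set_option maxHeartbeats 1000000 in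
lemma hDF4 : D F4 = ((-4069272) + (-2416) * YY^1 + 184 * XX^1 + 4 * XX^1 * YY^1 + 273 * XX^2 : MvPolynomial (Fin 2) ℚ) := by
  rw [F4, D, XX, YY]
  simp only [pderiv_mul, map_add, map_sub, map_neg, pderiv_X, pderiv_pow, pderiv_ofNat,
    Pi.single_eq_same, Pi.single_eq_of_ne (by decide : (0:Fin 2) ≠ 1),
    Pi.single_eq_of_ne (by decide : (1:Fin 2) ≠ 0)]
  ring

set_option maxHeartbeats 1000000 in
lemma hDF9 : D F9 = (30320178309688 + (-59583665208) * YY^1 + (-27312464) * YY^2 + 608804179616 * XX^1 + (-652394816) * XX^1 * YY^1 + (-1536) * XX^1 * YY^2 + (-2049185912) * XX^2 + (-4623480) * XX^2 * YY^1 + 48 * XX^2 * YY^2 + (-41331156) * XX^3 + (-8120) * XX^3 * YY^1 + (-1136) * XX^4 + 24 * XX^5 : MvPolynomial (Fin 2) ℚ) := by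
  rw [F9, D, XX, YY]
  simp only [pderiv_mul, map_add, map_sub, map_neg, pderiv_X, pderiv_pow, pderiv_ofNat,
    Pi.single_eq_same, Pi.single_eq_of_ne (by decide : (0:Fin 2) ≠ 1),
    Pi.single_eq_of_ne (by decide : (1:Fin 2) ≠ 0)]
  ring

set_option maxHeartbeats 1000000 in
lemma hDF14 : D F14 = (790348796924271772768 + (-190969424844111648) * YY^1 + (-671939307164608) * YY^2 + 14952415707450189808 * XX^1 + (-62824703758928832) * XX^1 * YY^1 + (-16512318835712) * XX^1 * YY^2 + 130476507392769748 * XX^2 + (-696126378151764) * XX^2 * YY^1 + (-113284608024) * XX^2 * YY^2 + (-173071282726720) * XX^3 + (-1904110722976) * XX^3 * YY^1 + (-159794880) * XX^3 * YY^2 + (-11530784138692) * XX^4 + (-3434572820) * XX^4 * YY^1 + (-84280) * XX^4 * YY^2 + (-56303086994) * XX^5 + 4800852 * XX^5 * YY^1 + (-59939880) * XX^6 + 112 * XX^6 * YY^1 + (-25284) * XX^7 : MvPolynomial (Fin 2) ℚ) := by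
  rw [F14, D, XX, YY]
  simp only [pderiv_mul, map_add, map_sub, map_neg, pderiv_X, pderiv_pow, pderiv_ofNat,
    Pi.single_eq_same, Pi.single_eq_of_ne (by decide : (0:Fin 2) ≠ 1),
    Pi.single_eq_of_ne (by decide : (1:Fin 2) ≠ 0)]
  ring

set_option maxHeartbeats 4000000 in
theorem proposition_2i :
    ∃ c₁ c₂ c₃ : ℚ, c₁ ≠ 0 ∧ c₂ ≠ 0 ∧ c₃ ≠ 0 ∧
      Ccurve ∣ (3 * F4 * D F9 - 7 * D F4 * F9) - C c₁ * F14 ∧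
      Ccurve ∣ (2 * F4 * D F14 - 7 * D F4 * F14) - C c₂ * F9 ^ 2 ∧
      Ccurve ∣ (2 * F9 * D F14 - 3 * D F9 * F14) - C c₃ * F4 ^ 6 := by
  refine ⟨-1, 343, 64, by norm_num, by norm_num, by norm_num, ?_, ?_, ?_⟩
  · refine ⟨((-9085831150808) + (-7456302672) * YY^1 + (-290018621888) * XX^1 + (-419328) * XX^1 * YY^1 + (-995498408) * XX^2 + 13104 * XX^2 * YY^1 + (-2249272) * XX^3 + (-80) * XX^4 : MvPolynomial (Fin 2) ℚ), ?_⟩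
    rw [hDF4, hDF9, Ccurve, F4, F9, F14, XX, YY]
    simp only [map_neg, map_one, map_ofNat]
    ring
  · refine ⟨((-185800232006822190912) + (-122292953903958656) * YY^1 + (-13835905146094608864) * XX^1 + (-3005242028099584) * XX^1 * YY^1 + (-161094020743638808) * XX^2 + (-20617798660368) * XX^2 * YY^1 + (-236683614762112) * XX^3 + (-29082668160) * XX^3 * YY^1 + (-161455524888) * XX^4 + (-15338960) * XX^4 * YY^1 + 1176640920 * XX^5 + 65856 * XX^6 : MvPolynomial (Fin 2) ℚ), ?_⟩
    rw [hDF4, hDF14, Ccurve, F4, F9, F14, XX, YY]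
    simp only [map_neg, map_one, map_ofNat]
    ring
  · refine ⟨((-4773171204162625917716307520) + 8855206378626446676784128 * YY^1 + (-3280016154563684070080) * YY^2 + 545600590059249088 * YY^3 + (-36343632130624) * YY^4 + (-75480064251711313907919616) * XX^1 + 159415844373324315768320 * XX^1 * YY^1 + (-34589266434787291136) * XX^1 * YY^2 + 2894710392118272 * XX^1 * YY^3 + 5072111308586404631872 * XX^2 + 959440503003497620224 * XX^2 * YY^1 + (-66124102865853760) * XX^2 * YY^2 + (-2396283437184) * XX^2 * YY^3 + 1846957156536247970144 * XX^3 + 2559438352050657728 * XX^3 * YY^1 + 122706389414336 * XX^3 * YY^2 + (-21476212663941340928) * XX^4 + 2500931987062208 * XX^4 * YY^1 + (-65831962560) * XX^4 * YY^2 + (-105952984580712192) * XX^5 + 3647605039232 * XX^5 * YY^1 + (-283109816891328) * XX^6 + (-619090304) * XX^6 * YY^1 + (-186363767200) * XX^7 + (-134848) * XX^7 * YY^1 + (-23013184) * XX^8 + 640 * XX^9 : MvPolynomial (Fin 2) ℚ), ?_⟩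
    rw [hDF9, hDF14, Ccurve, F4, F9, F14, XX, YY]
    simp only [map_neg, map_one, map_ofNat]
    ring
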